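/- For all integers a > b ≥ 1, the binomial coefficient C(a,b) satisfies C(a,b) > (1/(2√a)) · (a/b)^b. -/
import Mathlib

lemma aux_pow_le_choose (a b : ℕ) (hba : b ≤ a) : ((a:ℝ)/b)^b ≤ a.choose b := by
  rcases Nat.eq_zero_or_pos b with rfl | hb
  · simp
  have hb' : (0:ℝ) < b := by exact_mod_cast hb
  have hfac : (Nat.factorial b : ℝ) = ∏ i ∈ Finset.range b, ((b - i : ℕ) : ℝ) := by
    rw [← Nat.descFactorial_self, Nat.descFactorial_eq_prod_range]
    push_cast
    rfl
  have hchoose : (a.choose b : ℝ) = ∏ i ∈ Finset.range b, (((a - i : ℕ):ℝ)/((b - i : ℕ):ℝ)) := by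
    rw [Finset.prod_div_distrib, ← hfac, ← Nat.cast_prod, ← Nat.descFactorial_eq_prod_range,
      eq_div_iff (by positivity), Nat.descFactorial_eq_factorial_mul_choose]
    push_cast
    ring
  rw [hchoose]
  have : ((a:ℝ)/b)^b = ∏ _i ∈ Finset.range b, ((a:ℝ)/b) := by
    rw [Finset.prod_const, Finset.card_range]
  rw [this]
  apply Finset.prod_le_prod
  · intro i _; positivity
  · intro i hi
    rw [Finset.mem_range] at hi
    have hib : i < b := hi
    have hia : i < a := lt_of_lt_of_le hib hba
    rw [Nat.cast_sub hib.le, Nat.cast_sub hia.le]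
    rw [div_le_div_iff₀ hb' (by push_cast; linarith [(by exact_mod_cast hib : (i:ℝ) < b)])]
    have h1 : (i:ℝ) * b ≤ (i:ℝ) * a := by
      apply mul_le_mul_of_nonneg_left _ (by positivity)
      exact_mod_cast hba
    nlinarith

theorem stmt_5 (a b : ℕ) (hb : 1 ≤ b) (hab : b < a) :
    (1 / (2 * Real.sqrt a)) * ((a : ℝ) / b) ^ b < (a.choose b : ℝ) := by
  have h1 := aux_pow_le_choose a b hab.le
  have ha2 : (2:ℝ) ≤ a := by exact_mod_cast (by omega : 2 ≤ a)
  have hs : (1:ℝ) ≤ Real.sqrt a := by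
    rw [Real.one_le_sqrt]; linarith
  have hX : (0:ℝ) < ((a:ℝ)/b)^b := by
    have hb' : (0:ℝ) < b := by exact_mod_cast hb
    positivity
  have : (1 / (2 * Real.sqrt a)) * ((a : ℝ) / b) ^ b < 1 * ((a : ℝ) / b) ^ b := by
    apply mul_lt_mul_of_pos_right _ hX
    rw [div_lt_one (by linarith)]; linarith
  linarith
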